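/- Let n > d ≥ 3 with 2d ≥ n+3, and let ℓ be an integer with n−d+3 ≤ ℓ ≤ d. Let w be any vertex of the block TT_{⌈(n−d+1)/2⌉} of the tournament T_{d,n}^−. Then the number of circuits of length ℓ in T_{d,n}^− passing through w equals 2^{⌈(n−d+1)/2⌉ − 1}. -/

import Mathlib

/-- A tournament on a vertex type `V`: every ordered pair of distinct vertices
carries exactly one arc. `adj v w = true` means there is an arc from `v` to `w`
(`v` dominates `w`). -/
structure Tournament (V : Type*) where
  adj : V → V → Bool
  irrefl : ∀ v, adj v v = false
  compl : ∀ v w, v ≠ w → adj v w = !adj w v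

namespace Tournament

variable {V : Type*} {W : Type*}

/-- The subtournament induced on a set of vertices. -/
def restrict (T : Tournament V) (s : Set V) : Tournament s where
  adj a b := T.adj a b
  irrefl a := T.irrefl a
  compl a b h := T.compl a b (fun hab => h (Subtype.ext hab))

/-- A tournament is strongly connected if every vertex can be reached from
every other one by a directed path. -/
def Strong (T : Tournament V) : Prop :=
  ∀ v w : V, Relation.ReflTransGen (fun a b => T.adj a b = true) v w

/-- A vertex of a tournament is non-critical if deleting it leaves a strongly
connected tournament. -/
def Noncritical (T : Tournament V) (w : V) : Prop :=
  (T.restrict {x | x ≠ w}).Strong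

/-- There is a directed walk of length `k` from `v` to `w`. -/
def HasWalk (T : Tournament V) (v w : V) (k : ℕ) : Prop :=
  ∃ f : Fin (k + 1) → V, f 0 = v ∧ f (Fin.last k) = w ∧
    ∀ i : Fin k, T.adj (f i.castSucc) (f i.succ) = true

/-- The distance from `v` to `w`: the length of a shortest directed path. -/
noncomputable def dist (T : Tournament V) (v w : V) : ℕ :=
  sInf {k | T.HasWalk v w k}

/-- The diameter: the maximum distance over ordered pairs of distinct vertices. -/
noncomputable def diam (T : Tournament V) : ℕ :=
  sSup {m | ∃ v w : V, v ≠ w ∧ T.dist v w = m}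

/-- Cyclic successor on `Fin ℓ`. -/
def cyc {ℓ : ℕ} (i : Fin ℓ) : Fin ℓ :=
  if h : i.val + 1 < ℓ then ⟨i.val + 1, h⟩ else ⟨0, i.pos⟩

/-- The number of circuits (directed cycles through distinct vertices) of
length `ℓ` in `T`.  Each circuit is represented by exactly `ℓ` cyclic
parametrisations, whence the division. -/
noncomputable def circCount (T : Tournament V) (ℓ : ℕ) : ℕ :=
  Nat.card {f : Fin ℓ → V // Function.Injective f ∧
    ∀ i : Fin ℓ, T.adj (f i) (f (cyc i)) = true} / ℓ

/-- The number of circuits of length `ℓ` in `T` passing through the vertex `w`. -/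
noncomputable def circCountAt (T : Tournament V) (ℓ : ℕ) (w : V) : ℕ :=
  Nat.card {f : Fin ℓ → V // Function.Injective f ∧
    (∀ i : Fin ℓ, T.adj (f i) (f (cyc i)) = true) ∧ ∃ i, f i = w} / ℓ

/-- The number of strongly connected subtournaments of order `ℓ` in `T`. -/
noncomputable def strongSubCount (T : Tournament V) (ℓ : ℕ) : ℕ :=
  Nat.card {s : Finset V // s.card = ℓ ∧ (T.restrict ↑s).Strong}

/-- Isomorphism of tournaments. -/
def Iso (T : Tournament V) (S : Tournament W) : Prop :=
  ∃ e : V ≃ W, ∀ a b : V, T.adj a b = S.adj (e a) (e b)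

/-- Build a tournament from the function `f` recording which arcs point
"upwards" with respect to a linear order on the vertices. -/
def ofFn [LinearOrder V] (f : V → V → Bool) : Tournament V where
  adj u v := if u < v then f u v else if v < u then !f v u else false
  irrefl v := by simp
  compl u v h := by
    rcases lt_trichotomy u v with h1 | h1 | h1
    · simp [h1, not_lt_of_gt h1]
    · exact absurd h1 h
    · simp [h1, not_lt_of_gt h1]

/-- The tournament `T_{n-1,n}(z_0,…,z_{n-1})`: `z_i → z_{i+1}` and `z_j → z_i`
for `j > i + 1`. -/
def lineT (n : ℕ) : Tournament (Fin n) :=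
  ofFn fun i j => decide (j.val = i.val + 1)

end Tournament

/-- Block index used to describe `T_{d,n}`: the vertices `0,…,a-1` form the
first block (corresponding to `z_0` of `T_{d,d+1}`), the next `d-1` vertices
are the singleton blocks `z_1,…,z_{d-1}`, and the remaining vertices form the
last block (corresponding to `z_d`). -/
def blockIdx (a d x : ℕ) : ℕ :=
  if x < a then 0 else if x < a + d - 1 then x - a + 1 else d

/-- The composition `T_{d,d+1}(TT_a, v_1, …, v_{d-1}, TT_b)` on `Fin n`
(`b = n - a - (d-1)`): within a block the tournament is transitive, and
between distinct blocks the arcs follow `T_{d,d+1}`. -/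
def TdnAux (a d n : ℕ) : Tournament (Fin n) :=
  Tournament.ofFn fun i j => decide (blockIdx a d j.val ≤ blockIdx a d i.val + 1)

/-- `T_{d,n} = T_{d,d+1}(TT_{⌊(n-d+1)/2⌋}, v_1, …, v_{d-1}, TT_{⌈(n-d+1)/2⌉})`. -/
def Tdn (d n : ℕ) : Tournament (Fin n) := TdnAux ((n - d + 1) / 2) d n

/-- `T_{d,n}^- = T_{d,d+1}(TT_{⌈(n-d+1)/2⌉}, v_1, …, v_{d-1}, TT_{⌊(n-d+1)/2⌋})`. -/
def Tdnm (d n : ℕ) : Tournament (Fin n) := TdnAux ((n - d + 2) / 2) d n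


section Proof12

open Finset Tournament

variable {n : ℕ}

lemma blockIdx_mono (a d : ℕ) {x y : ℕ} (h : x ≤ y) :
    blockIdx a d x ≤ blockIdx a d y := by
  unfold blockIdx; split_ifs <;> omega

lemma blockIdx_le (a d x : ℕ) (hd : 1 ≤ d) : blockIdx a d x ≤ d := by
  unfold blockIdx; split_ifs <;> omega

lemma blockIdx_zero {a d x : ℕ} (h : x < a) : blockIdx a d x = 0 := by
  unfold blockIdx; split_ifs <;> omega

lemma blockIdx_mid {a d x : ℕ} (h1 : a ≤ x) (h2 : x < a + d - 1) :
    blockIdx a d x = x - a + 1 := by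
  unfold blockIdx; split_ifs <;> omega

lemma blockIdx_zero_inv {a d x : ℕ} (hd : 1 ≤ d) (h : blockIdx a d x = 0) : x < a := by
  unfold blockIdx at h; split_ifs at h <;> omega

lemma blockIdx_mid_inv {a d x k : ℕ} (hk1 : 1 ≤ k) (hk2 : k ≤ d - 1)
    (h : blockIdx a d x = k) : x = a + k - 1 := by
  unfold blockIdx at h; split_ifs at h <;> omega

lemma TdnAux_adj_iff (a d : ℕ) (u v : Fin n) :
    (TdnAux a d n).adj u v = true ↔
      (u.val < v.val ∧ blockIdx a d v.val ≤ blockIdx a d u.val + 1) ∨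
      (v.val < u.val ∧ blockIdx a d u.val ≥ blockIdx a d v.val + 2) := by
  rcases lt_trichotomy u v with h | h | h
  · have hv : u.val < v.val := h
    have hv' : ¬ v.val < u.val := by omega
    simp [TdnAux, Tournament.ofFn, h, not_lt_of_gt h, hv, hv']
  · subst h; simp [TdnAux, Tournament.ofFn]
  · have hv : v.val < u.val := h
    have hv' : ¬ u.val < v.val := by omega
    simp [TdnAux, Tournament.ofFn, h, not_lt_of_gt h, hv, hv']
    omega

lemma cyc_eq_add_one {ℓ : ℕ} [NeZero ℓ] (i : Fin ℓ) : cyc i = i + 1 := by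
  have hℓ : 0 < ℓ := i.pos
  have h1 : (1 : Fin ℓ).val = 1 % ℓ := Fin.val_one' ℓ
  apply Fin.ext
  rw [Fin.add_def, h1]
  unfold Tournament.cyc
  have h2 := i.isLt
  rcases Nat.lt_or_ge 1 ℓ with h3 | h3
  · have h4 : 1 % ℓ = 1 := Nat.mod_eq_of_lt h3
    rw [h4]
    split_ifs with h
    · simp [Nat.mod_eq_of_lt h]
    · have : i.val + 1 = ℓ := by omega
      simp [this]
  · interval_cases ℓ <;> omega


/-- Canonical circuit parametrisation: first the elements of `S` in increasing
order, then the singleton vertices `a, a+1, …`. -/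
def gamA (ℓ a : ℕ) {n : ℕ} (w : Fin n) (S : Finset (Fin n)) (j : Fin ℓ) : Fin n :=
  if h : j.val < S.card then S.orderEmbOfFin rfl ⟨j.val, h⟩
  else if h2 : a + (j.val - S.card) < n then ⟨a + (j.val - S.card), h2⟩ else w

lemma card_B0 {a : ℕ} (han : a ≤ n) :
    ((Finset.univ : Finset (Fin n)).filter fun x => x.val < a).card = a := by
  apply Finset.card_eq_of_bijective (fun i hi => ⟨i, lt_of_lt_of_le hi han⟩)
  · intro x hx
    simp only [mem_filter, mem_univ, true_and] at hx
    exact ⟨x.val, hx, rfl⟩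
  · intro i hi
    simp [hi]
  · intro i j hi hj hij
    simpa using congrArg Fin.val hij

section GamLemmas

variable {ℓ a d : ℕ} {w : Fin n} {S : Finset (Fin n)}

lemma S_card_le (han : a ≤ n) (hS : ∀ x ∈ S, x.val < a) : S.card ≤ a := by
  have h := Finset.card_le_card
    (show S ⊆ (Finset.univ : Finset (Fin n)).filter (fun x => x.val < a) from
      fun x hx => mem_filter.mpr ⟨mem_univ x, hS x hx⟩)
  rwa [card_B0 han] at h

lemma gamA_lt (w : Fin n) (S : Finset (Fin n)) (j : Fin ℓ) (h : j.val < S.card) :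
    gamA ℓ a w S j = S.orderEmbOfFin rfl ⟨j.val, h⟩ := dif_pos h

lemma gamA_ge (w : Fin n) (S : Finset (Fin n)) (j : Fin ℓ) (h : ¬ j.val < S.card)
    (h2 : a + (j.val - S.card) < n) :
    gamA ℓ a w S j = ⟨a + (j.val - S.card), h2⟩ := by
  unfold gamA; rw [dif_neg h, dif_pos h2]

lemma gamA_inj (hd3 : 3 ≤ d) (han : a + d ≤ n) (hal : a + 2 ≤ ℓ) (hld : ℓ ≤ d)
    (hS : ∀ x ∈ S, x.val < a) (hwS : w ∈ S) :
    Function.Injective (gamA ℓ a w S) := by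
  have hs1 : 1 ≤ S.card := Finset.card_pos.mpr ⟨w, hwS⟩
  have hsa : S.card ≤ a := S_card_le (by omega) hS
  have hbound : ∀ j : Fin ℓ, a + (j.val - S.card) < n := by
    intro j
    have := j.isLt
    omega
  intro j j' hjj
  by_cases h1 : j.val < S.card <;> by_cases h2 : j'.val < S.card
  · rw [gamA_lt w S j h1, gamA_lt w S j' h2] at hjj
    have h3 := congrArg Fin.val ((S.orderEmbOfFin rfl).injective hjj)
    simp at h3
    exact Fin.ext h3
  · rw [gamA_lt w S j h1, gamA_ge w S j' h2 (hbound j')] at hjj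
    have hm := S.orderEmbOfFin_mem rfl ⟨j.val, h1⟩
    have := hS _ hm
    rw [hjj] at this
    simp at this
  · rw [gamA_ge w S j h1 (hbound j), gamA_lt w S j' h2] at hjj
    have hm := S.orderEmbOfFin_mem rfl ⟨j'.val, h2⟩
    have := hS _ hm
    rw [← hjj] at this
    simp at this
  · rw [gamA_ge w S j h1 (hbound j), gamA_ge w S j' h2 (hbound j')] at hjj
    have := congrArg Fin.val hjj
    simp at this
    exact Fin.ext (by omega)

lemma gamA_adj (hd3 : 3 ≤ d) (han : a + d ≤ n) (hal : a + 2 ≤ ℓ) (hld : ℓ ≤ d)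
    (hS : ∀ x ∈ S, x.val < a) (hwS : w ∈ S) (j : Fin ℓ) :
    (TdnAux a d n).adj (gamA ℓ a w S j) (gamA ℓ a w S (cyc j)) = true := by
  have hs1 : 1 ≤ S.card := Finset.card_pos.mpr ⟨w, hwS⟩
  have hsa : S.card ≤ a := S_card_le (by omega) hS
  have hjl := j.isLt
  rw [TdnAux_adj_iff]
  unfold Tournament.cyc
  split_ifs with hcy
  · by_cases h1 : j.val + 1 < S.card
    · -- both inside S
      have hj : j.val < S.card := by omega
      rw [gamA_lt w S j hj, gamA_lt w S _ h1]
      have hlt : (S.orderEmbOfFin rfl) ⟨j.val, hj⟩ < (S.orderEmbOfFin rfl) ⟨j.val + 1, h1⟩ :=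
        (S.orderEmbOfFin rfl).strictMono (show (⟨j.val, hj⟩ : Fin S.card) < ⟨j.val + 1, h1⟩ by
          simp [Fin.lt_def])
      have hv1 := hS _ (S.orderEmbOfFin_mem rfl ⟨j.val, hj⟩)
      have hv2 := hS _ (S.orderEmbOfFin_mem rfl ⟨j.val + 1, h1⟩)
      left
      refine ⟨hlt, ?_⟩
      rw [blockIdx_zero hv1, blockIdx_zero hv2]
      omega
    · by_cases h2 : j.val < S.card
      · -- last element of S to first singleton
        have hse : j.val + 1 = S.card := by omega
        have hb : a + ((⟨j.val + 1, hcy⟩ : Fin ℓ).val - S.card) < n := by simp; omega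
        rw [gamA_lt w S j h2, gamA_ge w S _ (by simp; omega) hb]
        have hv1 := hS _ (S.orderEmbOfFin_mem rfl ⟨j.val, h2⟩)
        left
        constructor
        · simp; omega
        · rw [blockIdx_zero hv1, blockIdx_mid (by simp) (by simp; omega)]
          simp
          omega
      · -- two singletons
        have hb1 : a + (j.val - S.card) < n := by omega
        have hb2 : a + ((⟨j.val + 1, hcy⟩ : Fin ℓ).val - S.card) < n := by simp; omega
        rw [gamA_ge w S j h2 hb1, gamA_ge w S _ (by simp; omega) hb2]
        left
        constructor
        · simp; omega
        · rw [blockIdx_mid (by simp) (by simp; omega), blockIdx_mid (by simp) (by simp; omega)]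
          simp
          omega
  · -- wrap-around step
    have hje : j.val = ℓ - 1 := by omega
    have h2 : ¬ j.val < S.card := by omega
    have hb1 : a + (j.val - S.card) < n := by omega
    have h0 : (⟨0, j.pos⟩ : Fin ℓ).val < S.card := by simpa using hs1
    rw [gamA_ge w S j h2 hb1, gamA_lt w S _ h0]
    have hv2 := hS _ (S.orderEmbOfFin_mem rfl ⟨(⟨0, j.pos⟩ : Fin ℓ).val, h0⟩)
    simp only [Fin.val_mk] at hv2
    right
    constructor
    · simp
      omega
    · rw [blockIdx_zero hv2, blockIdx_mid (by simp) (by simp; omega)]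
      simp
      omega

lemma gamA_val_lt_iff (hd3 : 3 ≤ d) (han : a + d ≤ n) (hal : a + 2 ≤ ℓ) (hld : ℓ ≤ d)
    (hS : ∀ x ∈ S, x.val < a) (hwS : w ∈ S) (x : Fin n) :
    ((∃ j : Fin ℓ, gamA ℓ a w S j = x) ∧ x.val < a) ↔ x ∈ S := by
  have hs1 : 1 ≤ S.card := Finset.card_pos.mpr ⟨w, hwS⟩
  have hsa : S.card ≤ a := S_card_le (by omega) hS
  constructor
  · rintro ⟨⟨j, rfl⟩, hxa⟩
    by_cases h1 : j.val < S.card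
    · rw [gamA_lt w S j h1]
      exact S.orderEmbOfFin_mem rfl ⟨j.val, h1⟩
    · have hb : a + (j.val - S.card) < n := by have := j.isLt; omega
      rw [gamA_ge w S j h1 hb] at hxa ⊢
      simp at hxa
  · intro hx
    have hrange : x ∈ Set.range (S.orderEmbOfFin rfl) := by
      rw [Finset.range_orderEmbOfFin]
      exact hx
    obtain ⟨u, hu⟩ := hrange
    have hu2 : u.val < ℓ := by have := u.isLt; omega
    have hj : ((⟨u.val, hu2⟩ : Fin ℓ)).val < S.card := u.isLt
    refine ⟨⟨⟨u.val, hu2⟩, ?_⟩, hS x hx⟩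
    rw [gamA_lt w S _ hj, ← hu]

end GamLemmas


open Fin.NatCast in
lemma main_surj {d ℓ a : ℕ} (hd3 : 3 ≤ d) (han : a + d ≤ n) (hal : a + 2 ≤ ℓ) (hld : ℓ ≤ d)
    (w : Fin n) (hw : w.val < a)
    (f : Fin ℓ → Fin n) (hinj : Function.Injective f)
    (hadj : ∀ i : Fin ℓ, (TdnAux a d n).adj (f i) (f (cyc i)) = true)
    (hwf : ∃ i, f i = w) :
    ∃ (r : Fin ℓ) (S : Finset (Fin n)), (∀ x ∈ S, x.val < a) ∧ w ∈ S ∧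
      ∀ i : Fin ℓ, f i = gamA ℓ a w S (i - r) := by
  haveI : NeZero ℓ := ⟨by omega⟩
  have hadj' : ∀ i : Fin ℓ, (TdnAux a d n).adj (f i) (f (i+1)) = true := by
    intro i
    have h := hadj i
    rwa [cyc_eq_add_one] at h
  have hstep : ∀ i : Fin ℓ,
      ((f i).val < (f (i+1)).val ∧ blockIdx a d (f (i+1)).val ≤ blockIdx a d (f i).val + 1) ∨
      ((f (i+1)).val < (f i).val ∧
        blockIdx a d (f i).val ≥ blockIdx a d (f (i+1)).val + 2) :=
    fun i => (TdnAux_adj_iff a d _ _).mp (hadj' i)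
  have hcast : ∀ t : ℕ, t < ℓ → ((t : Fin ℓ)).val = t := by
    intro t ht
    rw [Fin.val_natCast]
    exact Nat.mod_eq_of_lt ht
  have hcast_inj : ∀ t u : ℕ, t < ℓ → u < ℓ → ((t : Fin ℓ) = (u : Fin ℓ)) → t = u := by
    intro t u ht hu h
    have h2 := congrArg Fin.val h
    rwa [hcast t ht, hcast u hu] at h2
  have hsucc : ∀ (i : Fin ℓ) (t : ℕ), i + ((t+1 : ℕ) : Fin ℓ) = (i + ((t:ℕ) : Fin ℓ)) + 1 := by
    intro i t
    rw [Nat.cast_add, Nat.cast_one, add_assoc]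
  obtain ⟨iw, hiw⟩ := hwf
  -- there is an exit from block 0
  have hexit : ∃ i : Fin ℓ, (f i).val < a ∧ ¬ (f (i+1)).val < a := by
    by_contra hcon
    push_neg at hcon
    have hz : ∀ t : ℕ, (f (iw + (t:Fin ℓ))).val < a := by
      intro t
      induction t with
      | zero => rw [Nat.cast_zero, add_zero, hiw]; exact hw
      | succ t ih =>
        have h := hcon _ ih
        rwa [← hsucc iw t] at h
    have hmono : StrictMono (fun t : ℕ => (f (iw + (t : Fin ℓ))).val) := by
      apply strictMono_nat_of_lt_succ
      intro t
      rcases hstep (iw + (t:Fin ℓ)) with ⟨h1, _⟩ | ⟨h1, h2⟩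
      · rw [hsucc iw t]
        exact h1
      · exfalso
        have hb1 := blockIdx_zero (a := a) (d := d) (hz t)
        have hb2 := blockIdx_zero (a := a) (d := d) (hz (t+1))
        rw [hsucc iw t] at hb2
        omega
    have h0ℓ := hmono (show 0 < ℓ by omega)
    simp only [Nat.cast_zero, add_zero, Fin.natCast_self] at h0ℓ
    omega
  obtain ⟨p, hp0, hp1⟩ := hexit
  have hfp1 : (f (p+1)).val = a := by
    rcases hstep p with ⟨h1, h2⟩ | ⟨h1, h2⟩
    · have hb0 : blockIdx a d (f p).val = 0 := blockIdx_zero hp0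
      have hbn : blockIdx a d (f (p+1)).val ≠ 0 := by
        intro h
        exact hp1 (blockIdx_zero_inv (by omega) h)
      have hq : blockIdx a d (f (p+1)).val = 1 := by omega
      have := blockIdx_mid_inv (k := 1) (by omega) (by omega) hq
      omega
    · exfalso
      have hb0 : blockIdx a d (f p).val = 0 := blockIdx_zero hp0
      omega
  set c := p + 1 with hc
  have hcp : c + ((ℓ-1 : ℕ) : Fin ℓ) = p := by
    have h1 : ((1:ℕ) + (ℓ-1) : ℕ) = ℓ := by omega
    calc p + 1 + ((ℓ-1:ℕ) : Fin ℓ)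
        = p + (((1:ℕ):Fin ℓ) + ((ℓ-1:ℕ):Fin ℓ)) := by rw [add_assoc, Nat.cast_one]
      _ = p + (((1 + (ℓ-1) : ℕ)) : Fin ℓ) := by rw [Nat.cast_add]
      _ = p := by rw [h1, Fin.natCast_self, add_zero]
  have hex0 : ∃ t : ℕ, (f (c + (t : Fin ℓ))).val < a := ⟨ℓ-1, by rw [hcp]; exact hp0⟩
  set m := Nat.find hex0 with hmdef
  have hm0 : (f (c + (m : Fin ℓ))).val < a := Nat.find_spec hex0
  have hmmin : ∀ t, t < m → ¬ (f (c + (t:Fin ℓ))).val < a := fun t ht => Nat.find_min hex0 ht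
  have hmle : m ≤ ℓ - 1 := Nat.find_min' hex0 (by rw [hcp]; exact hp0)
  have hm1 : 1 ≤ m := by
    by_contra h
    have h0 : m = 0 := by omega
    rw [h0, Nat.cast_zero, add_zero] at hm0
    omega
  -- the chain of singleton blocks
  have chain : ∀ t, t < m → ((f (c + (t : Fin ℓ))).val = a + t ∧ t + 1 ≤ d - 1) := by
    intro t
    induction t using Nat.strong_induction_on with
    | _ t ih =>
    intro htm
    match t with
    | 0 =>
      rw [Nat.cast_zero, add_zero]
      exact ⟨by omega, by omega⟩
    | (t' + 1) =>
      obtain ⟨hval, hbd⟩ := ih t' (by omega) (by omega)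
      have hbu : blockIdx a d (f (c + (t' : Fin ℓ))).val = t' + 1 := by
        rw [hval, blockIdx_mid (by omega) (by omega)]
        omega
      have hpos : c + ((t'+1 : ℕ) : Fin ℓ) = (c + ((t' : ℕ) : Fin ℓ)) + 1 := hsucc c t'
      have hbvne : ¬ (f (c + ((t'+1:ℕ) : Fin ℓ))).val < a := hmmin _ htm
      have hbvne0 : blockIdx a d (f (c + ((t'+1:ℕ) : Fin ℓ))).val ≠ 0 := by
        intro h
        exact hbvne (blockIdx_zero_inv (by omega) h)
      have hposne : c + ((t'+1:ℕ) : Fin ℓ) ≠ c + ((t' : ℕ) : Fin ℓ) := by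
        intro h
        have := hcast_inj (t'+1) t' (by omega) (by omega) (add_left_cancel h)
        omega
      rcases hstep (c + (t' : Fin ℓ)) with ⟨h1, h2⟩ | ⟨h1, h2⟩
      · rw [← hpos] at h1 h2
        have hmono := blockIdx_mono a d (le_of_lt h1)
        have hble := blockIdx_le a d (f (c + ((t'+1:ℕ) : Fin ℓ))).val (by omega)
        have hq : blockIdx a d (f (c + ((t'+1:ℕ) : Fin ℓ))).val = t' + 1 ∨
            blockIdx a d (f (c + ((t'+1:ℕ) : Fin ℓ))).val = t' + 2 := by omega
        rcases hq with hq | hq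
        · exfalso
          have hv := blockIdx_mid_inv (k := t'+1) (by omega) (by omega) hq
          have hfe : f (c + ((t'+1:ℕ) : Fin ℓ)) = f (c + ((t' : ℕ) : Fin ℓ)) :=
            Fin.ext (by omega)
          exact hposne (hinj hfe)
        · have hd2 : t' + 2 ≤ d - 1 := by
            by_contra hcon2
            have : t' + 2 = d := by omega
            omega
          have hv := blockIdx_mid_inv (k := t'+2) (by omega) (by omega) hq
          exact ⟨by omega, by omega⟩
      · rw [← hpos] at h1 h2
        exfalso
        set q := blockIdx a d (f (c + ((t'+1:ℕ) : Fin ℓ))).val with hqdef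
        have hq1 : 1 ≤ q := by omega
        have hq2 : q ≤ t' - 1 := by omega
        obtain ⟨hval2, _⟩ := ih (q - 1) (by omega) (by omega)
        have hv := blockIdx_mid_inv (k := q) (by omega) (by omega) hqdef.symm
        have hfe : f (c + ((t'+1:ℕ) : Fin ℓ)) = f (c + ((q - 1 : ℕ) : Fin ℓ)) :=
          Fin.ext (by omega)
        have := hcast_inj (t'+1) (q-1) (by omega) (by omega) (add_left_cancel (hinj hfe))
        omega
  -- the tail inside block 0
  have tail0 : ∀ k, m + k ≤ ℓ - 1 → (f (c + ((m+k : ℕ) : Fin ℓ))).val < a := by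
    intro k
    induction k with
    | zero => intro _; simpa using hm0
    | succ k ih =>
      intro hk
      have hprev := ih (by omega)
      have hpos : c + ((m+(k+1) : ℕ) : Fin ℓ) = (c + ((m+k:ℕ) : Fin ℓ)) + 1 := by
        rw [show m+(k+1) = (m+k)+1 by omega]
        exact hsucc c (m+k)
      rcases hstep (c + ((m+k:ℕ) : Fin ℓ)) with ⟨h1, h2⟩ | ⟨h1, h2⟩
      · rw [← hpos] at h1 h2
        by_contra hv
        have hb0 : blockIdx a d (f (c + ((m+k:ℕ) : Fin ℓ))).val = 0 := blockIdx_zero hprev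
        have hbv : blockIdx a d (f (c + ((m+(k+1):ℕ) : Fin ℓ))).val = 1 := by
          have hne : blockIdx a d (f (c + ((m+(k+1):ℕ) : Fin ℓ))).val ≠ 0 := by
            intro h
            exact hv (blockIdx_zero_inv (by omega) h)
          omega
        have hvv := blockIdx_mid_inv (k := 1) (by omega) (by omega) hbv
        have hfe : f (c + ((m+(k+1):ℕ) : Fin ℓ)) = f (c + ((0:ℕ) : Fin ℓ)) := by
          apply Fin.ext
          rw [Nat.cast_zero, add_zero]
          omega
        have := hcast_inj (m+(k+1)) 0 (by omega) (by omega) (add_left_cancel (hinj hfe))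
        omega
      · exfalso
        have hb0 : blockIdx a d (f (c + ((m+k:ℕ) : Fin ℓ))).val = 0 := blockIdx_zero hprev
        omega
  have tailinc : ∀ k, m + k + 1 ≤ ℓ - 1 →
      (f (c + ((m+k:ℕ) : Fin ℓ))).val < (f (c + ((m+(k+1):ℕ) : Fin ℓ))).val := by
    intro k hk
    have hpos : c + ((m+(k+1) : ℕ) : Fin ℓ) = (c + ((m+k:ℕ) : Fin ℓ)) + 1 := by
      rw [show m+(k+1) = (m+k)+1 by omega]
      exact hsucc c (m+k)
    rcases hstep (c + ((m+k:ℕ) : Fin ℓ)) with ⟨h1, _⟩ | ⟨h1, h2⟩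
    · rwa [← hpos] at h1
    · exfalso
      have hb0 : blockIdx a d (f (c + ((m+k:ℕ) : Fin ℓ))).val = 0 :=
        blockIdx_zero (tail0 k (by omega))
      omega
  set s := ℓ - m with hsdef
  have hs1 : 1 ≤ s := by omega
  set g : Fin s → Fin n := fun u => f (c + ((m + u.val : ℕ) : Fin ℓ)) with hgdef
  have hkey : ∀ (k2 : ℕ), k2 < s → ∀ k1, k1 < k2 →
      (f (c + ((m+k1:ℕ) : Fin ℓ))).val < (f (c + ((m+k2:ℕ) : Fin ℓ))).val := by
    intro k2
    induction k2 with
    | zero => omega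
    | succ k ih =>
      intro hk2 k1 hk1
      have hlast := tailinc k (by omega)
      rcases Nat.lt_or_ge k1 k with h | h
      · exact lt_trans (ih (by omega) k1 h) hlast
      · have : k1 = k := by omega
        rw [this]
        exact hlast
  have hgmono : StrictMono g := by
    intro u v huv
    rw [Fin.lt_def] at huv ⊢
    exact hkey v.val v.isLt u.val huv
  set S := Finset.image g Finset.univ with hSdef
  have hScard : S.card = s := by
    rw [hSdef, Finset.card_image_of_injective _ hgmono.injective, Finset.card_univ,
      Fintype.card_fin]
  have hSsub : ∀ x ∈ S, x.val < a := by
    intro x hx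
    rw [hSdef, Finset.mem_image] at hx
    obtain ⟨u, _, rfl⟩ := hx
    exact tail0 u.val (by have := u.isLt; omega)
  have hwt : ∃ t, t < ℓ ∧ c + ((t:ℕ) : Fin ℓ) = iw :=
    ⟨(iw - c).val, (iw - c).isLt, by rw [Fin.cast_val_eq_self]; abel⟩
  obtain ⟨tw, htwl, htw⟩ := hwt
  have htm : m ≤ tw := by
    by_contra h
    push_neg at h
    have h2 := (chain tw h).1
    rw [htw, hiw] at h2
    omega
  have hwS : w ∈ S := by
    rw [hSdef, Finset.mem_image]
    refine ⟨⟨tw - m, by omega⟩, Finset.mem_univ _, ?_⟩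
    simp only [hgdef]
    rw [show m + (tw - m) = tw by omega, htw, hiw]
  have hge : g = S.orderEmbOfFin hScard := by
    apply Finset.orderEmbOfFin_unique hScard
    · intro u
      rw [hSdef, Finset.mem_image]
      exact ⟨u, Finset.mem_univ _, rfl⟩
    · exact hgmono
  have hbridge : ∀ (j : ℕ) (hj : j < S.card) (hj' : j < s),
      S.orderEmbOfFin rfl ⟨j, hj⟩ = S.orderEmbOfFin hScard ⟨j, hj'⟩ := by
    intro j hj hj'
    rw [Finset.orderEmbOfFin_apply, Finset.orderEmbOfFin_apply]
    simp
  refine ⟨c + ((m:ℕ) : Fin ℓ), S, hSsub, hwS, ?_⟩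
  intro i
  set u := i - (c + ((m:ℕ):Fin ℓ)) with hudef
  have hi : i = (c + ((m:ℕ):Fin ℓ)) + u := by rw [hudef]; abel
  rw [hi]
  by_cases hus : u.val < s
  · have hpos : (c + ((m:ℕ):Fin ℓ)) + u = c + ((m + u.val : ℕ) : Fin ℓ) := by
      rw [Nat.cast_add, Fin.cast_val_eq_self, add_assoc]
    rw [hpos]
    have husS : u.val < S.card := by rw [hScard]; exact hus
    rw [gamA_lt w S u husS, hbridge u.val husS hus, ← hge]
  · have hub := u.isLt
    have hlt : u.val - s < m := by omega
    have hpos : (c + ((m:ℕ):Fin ℓ)) + u = c + ((u.val - s : ℕ) : Fin ℓ) := by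
      have h1 : ((m + u.val : ℕ) : Fin ℓ) = ((u.val - s : ℕ) : Fin ℓ) := by
        rw [show m + u.val = (u.val - s) + ℓ by omega, Nat.cast_add, Fin.natCast_self, add_zero]
      rw [← h1, Nat.cast_add, Fin.cast_val_eq_self, add_assoc]
    rw [hpos]
    have hchain := (chain (u.val - s) hlt).1
    have hchain2 := (chain (u.val - s) hlt).2
    have hnot : ¬ u.val < S.card := by rw [hScard]; omega
    have hb2 : a + (u.val - S.card) < n := by rw [hScard]; omega
    rw [gamA_ge w S u hnot hb2]
    apply Fin.ext
    simp only [Fin.val_mk]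
    rw [hchain, hScard]


lemma card_subsets {a : ℕ} (han : a ≤ n) (w : Fin n) (hw : w.val < a) :
    Nat.card {S : Finset (Fin n) // (∀ x ∈ S, x.val < a) ∧ w ∈ S} = 2^(a-1) := by
  set B := (Finset.univ : Finset (Fin n)).filter (fun x => x.val < a) with hB
  have hwB : w ∈ B := by simp [hB, hw]
  have e : {S : Finset (Fin n) // (∀ x ∈ S, x.val < a) ∧ w ∈ S} ≃
      {T // T ∈ (B.erase w).powerset} :=
    { toFun := fun ⟨S, hS⟩ => ⟨S.erase w, by
        rw [Finset.mem_powerset]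
        apply Finset.erase_subset_erase
        intro x hx
        simp only [hB, Finset.mem_filter, Finset.mem_univ, true_and]
        exact hS.1 x hx⟩
      invFun := fun ⟨T, hT⟩ => ⟨insert w T, by
        rw [Finset.mem_powerset] at hT
        refine ⟨?_, Finset.mem_insert_self w T⟩
        intro x hx
        rcases Finset.mem_insert.mp hx with rfl | hx2
        · exact hw
        · have h3 := Finset.mem_of_mem_erase (hT hx2)
          simp only [hB, Finset.mem_filter, Finset.mem_univ, true_and] at h3
          exact h3⟩
      left_inv := fun ⟨S, hS⟩ => Subtype.ext (Finset.insert_erase hS.2)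
      right_inv := fun ⟨T, hT⟩ => Subtype.ext (by
        apply Finset.erase_insert
        rw [Finset.mem_powerset] at hT
        intro hwT
        exact (Finset.notMem_erase w B) (hT hwT)) }
  rw [Nat.card_congr e, Nat.card_eq_finsetCard, Finset.card_powerset,
    Finset.card_erase_of_mem hwB, card_B0 han]

end Proof12


/-- For `n > d ≥ 3` with `2d ≥ n+3` and `n-d+3 ≤ ℓ ≤ d`, every vertex `w` of
the first block `TT_{⌈(n-d+1)/2⌉}` of `T_{d,n}^-` lies on exactly
`2^(⌈(n-d+1)/2⌉ - 1)` circuits of length `ℓ`. -/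
theorem statement_12 (n d ℓ : ℕ) (hd : 3 ≤ d) (hdn : d < n)
    (h2d : n + 3 ≤ 2 * d) (hℓ1 : n - d + 3 ≤ ℓ) (hℓ2 : ℓ ≤ d)
    (w : Fin n) (hw : w.val < (n - d + 2) / 2) :
    (Tdnm d n).circCountAt ℓ w = 2 ^ ((n - d + 2) / 2 - 1) := by
  unfold Tdnm Tournament.circCountAt
  set a := (n - d + 2) / 2 with ha
  have hd3 : 3 ≤ d := hd
  have han : a + d ≤ n := by omega
  have hal : a + 2 ≤ ℓ := by omega
  have hld : ℓ ≤ d := hℓ2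
  haveI : NeZero ℓ := ⟨by omega⟩
  have han2 : a ≤ n := by omega
  have hl0 : 0 < ℓ := by omega
  set Φ : (Fin ℓ × {S : Finset (Fin n) // (∀ x ∈ S, x.val < a) ∧ w ∈ S}) →
      {f : Fin ℓ → Fin n // Function.Injective f ∧
        (∀ i : Fin ℓ, (TdnAux a d n).adj (f i) (f (Tournament.cyc i)) = true) ∧
        ∃ i, f i = w} :=
    fun x => ⟨fun i => gamA ℓ a w x.2.val (i - x.1),
      by
        exact (gamA_inj hd3 han hal hld x.2.2.1 x.2.2.2).comp
          (fun i j h => by simpa using congrArg (· + x.1) h),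
      by
        intro i
        have h := gamA_adj hd3 han hal hld x.2.2.1 x.2.2.2 (i - x.1)
        have hcyc : Tournament.cyc i - x.1 = Tournament.cyc (i - x.1) := by
          rw [cyc_eq_add_one, cyc_eq_add_one]
          abel
        show (TdnAux a d n).adj (gamA ℓ a w x.2.val (i - x.1))
          (gamA ℓ a w x.2.val (Tournament.cyc i - x.1)) = true
        rw [hcyc]
        exact h,
      by
        have h := (gamA_val_lt_iff (S := x.2.val) hd3 han hal hld
          x.2.2.1 x.2.2.2 w).mpr x.2.2.2
        obtain ⟨⟨j, hj⟩, _⟩ := h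
        refine ⟨j + x.1, ?_⟩
        show gamA ℓ a w x.2.val (j + x.1 - x.1) = w
        rw [add_sub_cancel_right]
        exact hj⟩ with hΦ
  have hbij : Function.Bijective Φ := by
    constructor
    · rintro ⟨r, S, hS⟩ ⟨r', S', hS'⟩ heq
      have hfe : ∀ i : Fin ℓ, gamA ℓ a w S (i - r) = gamA ℓ a w S' (i - r') :=
        fun i => congrFun (congrArg Subtype.val heq) i
      have hSS : S = S' := by
        ext x
        rw [← gamA_val_lt_iff hd3 han hal hld hS.1 hS.2 x,
          ← gamA_val_lt_iff hd3 han hal hld hS'.1 hS'.2 x]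
        constructor
        · rintro ⟨⟨j, hj⟩, hxa⟩
          refine ⟨⟨j + r - r', ?_⟩, hxa⟩
          have h2 := hfe (j + r)
          rw [add_sub_cancel_right] at h2
          rw [← h2, hj]
        · rintro ⟨⟨j, hj⟩, hxa⟩
          refine ⟨⟨j + r' - r, ?_⟩, hxa⟩
          have h2 := hfe (j + r')
          rw [add_sub_cancel_right] at h2
          rw [h2, hj]
      subst hSS
      have h0 := hfe r
      rw [sub_self] at h0
      have h1 := gamA_inj hd3 han hal hld hS.1 hS.2 h0
      have hrr : r = r' := sub_eq_zero.mp h1.symm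
      subst hrr
      rfl
    · rintro ⟨f, hfinj, hfadj, hfw⟩
      obtain ⟨r, S, h1, h2, h3⟩ := main_surj hd3 han hal hld w hw f hfinj hfadj hfw
      exact ⟨(r, ⟨S, h1, h2⟩), Subtype.ext (funext fun i => (h3 i).symm)⟩
  have hcount := Nat.card_eq_of_bijective Φ hbij
  have hsub := card_subsets (n := n) (a := a) han2 w hw
  rw [← hcount, Nat.card_prod, hsub, Nat.card_eq_fintype_card, Fintype.card_fin]
  exact Nat.mul_div_cancel_left _ hl0
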